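/- Let p ≥ 0 be an integer, n > 0 real with n ≠ 1, and κ ∈ ℂ with κ ≠ 0, F_p(κ, n) = 0, J_p(κ) ≠ 0 and J_p(√n·κ) ≠ 0. Then the implicit-derivative quotient satisfies −(∂_n F_p(κ, n))/(∂_κ F_p(κ, n)) = −(n·κ² − p²)/(2n·(n − 1)·κ) − (κ·J_p'(κ)²)/(2n·(n − 1)·J_p(κ)²). -/

import Mathlib

open Complex Real Filter Set

/-- Bessel function of the first kind of integer order `p`. -/
noncomputable def besselJ (p : ℕ) (z : ℂ) : ℂ :=
  ∑' m : ℕ, ((-1 : ℂ) ^ m / ((Nat.factorial m : ℂ) * (Nat.factorial (m + p) : ℂ)))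
    * (z / 2) ^ (2 * m + p)

/-- Derivative of the Bessel function. -/
noncomputable def besselJ' (p : ℕ) (z : ℂ) : ℂ := deriv (besselJ p) z

/-- Normalized coefficient. -/
noncomputable def aa (p m : ℕ) : ℂ :=
  ((-1 : ℂ) ^ m / ((Nat.factorial m : ℂ) * (Nat.factorial (m + p) : ℂ))) / 2 ^ (2 * m + p)

lemma besselJ_eq (p : ℕ) (z : ℂ) : besselJ p z = ∑' m : ℕ, aa p m * z ^ (2 * m + p) := by
  unfold besselJ aa
  refine tsum_congr fun m => ?_
  rw [div_pow]
  ring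

lemma norm_aa (p m : ℕ) : ‖aa p m‖
    = 1 / ((Nat.factorial m : ℝ) * (Nat.factorial (m + p) : ℝ) * 2 ^ (2 * m + p)) := by
  unfold aa
  rw [norm_div, norm_div, norm_mul, norm_pow, norm_pow]
  simp [Complex.norm_natCast]
  ring

lemma key_bound (p m j : ℕ) (hj : j ≤ 2 * m + p) (C : ℝ) (hC0 : 0 ≤ C)
    (hC : C ≤ 4 ^ (2 * m + p)) (R : ℝ) (hR : 1 ≤ R) (x : ℝ) (hx0 : 0 ≤ x) (hx : x ≤ R) :
    ‖aa p m‖ * (C * x ^ j) ≤ (2 * R) ^ p * (4 * R ^ 2) ^ m / Nat.factorial m := by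
  have hfac1 : (1 : ℝ) ≤ (Nat.factorial (m + p) : ℝ) := by
    exact_mod_cast Nat.one_le_iff_ne_zero.2 (Nat.factorial_ne_zero _)
  have hm : (0:ℝ) < (Nat.factorial m : ℝ) := by positivity
  have hxj : x ^ j ≤ R ^ (2 * m + p) :=
    le_trans (pow_le_pow_left₀ hx0 hx j) (pow_le_pow_right₀ hR hj)
  have h1 : ‖aa p m‖ ≤ 1 / ((Nat.factorial m : ℝ) * 2 ^ (2 * m + p)) := by
    rw [norm_aa]
    apply div_le_div_of_nonneg_left one_pos.le (by positivity)
    calc (Nat.factorial m : ℝ) * 2 ^ (2 * m + p)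
        = (Nat.factorial m : ℝ) * 1 * 2 ^ (2 * m + p) := by ring
      _ ≤ (Nat.factorial m : ℝ) * (Nat.factorial (m + p) : ℝ) * 2 ^ (2 * m + p) := by
          gcongr
  have h2 : C * x ^ j ≤ 4 ^ (2 * m + p) * R ^ (2 * m + p) := by
    apply mul_le_mul hC hxj (by positivity) (by positivity)
  calc ‖aa p m‖ * (C * x ^ j)
      ≤ (1 / ((Nat.factorial m : ℝ) * 2 ^ (2 * m + p))) * (4 ^ (2 * m + p) * R ^ (2 * m + p)) :=
        mul_le_mul h1 h2 (by positivity) (by positivity)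
    _ = (2 * R) ^ p * (4 * R ^ 2) ^ m / Nat.factorial m := by
        have e1 : (4:ℝ)^(2*m+p) = 2^(2*m+p) * (2^p * 4^m) := by
          calc (4:ℝ)^(2*m+p) = ((2:ℝ)*2)^(2*m+p) := by norm_num
            _ = 2^(2*m+p) * 2^(2*m+p) := mul_pow 2 2 _
            _ = 2^(2*m+p) * (2^p * 4^m) := by
                rw [pow_add, pow_mul]; norm_num; ring
        rw [e1, show R^(2*m+p) = (R^2)^m * R^p by rw [pow_add, pow_mul]]
        field_simp
        ring

lemma summable_u (p : ℕ) (R : ℝ) :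
    Summable (fun m : ℕ => (2 * R) ^ p * (4 * R ^ 2) ^ m / Nat.factorial m) := by
  simpa only [mul_div_assoc] using (Real.summable_pow_div_factorial (4 * R ^ 2)).mul_left ((2*R)^p)

lemma nat_le_pow4 (k : ℕ) : (k : ℝ) ≤ 4 ^ k := by
  have h1 : k ≤ 4 ^ k := (Nat.lt_pow_self (n := k) (by norm_num : 1 < 4)).le
  exact_mod_cast h1

lemma nat_sq_le_pow4 (k : ℕ) : ((k : ℝ)) * ((k : ℝ)) ≤ 4 ^ k := by
  have h1 : k * k ≤ 4 ^ k := by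
    calc k * k ≤ 2 ^ k * 2 ^ k := Nat.mul_le_mul (Nat.lt_two_pow_self (n := k)).le (Nat.lt_two_pow_self (n := k)).le
      _ = 4 ^ k := by rw [← Nat.mul_pow]
  exact_mod_cast h1

lemma summable_aux (p : ℕ) (z : ℂ) (C : ℕ → ℝ) (j : ℕ → ℕ) (hj : ∀ m, j m ≤ 2 * m + p)
    (hC0 : ∀ m, 0 ≤ C m) (hC : ∀ m, C m ≤ 4 ^ (2 * m + p)) (f : ℕ → ℂ)
    (hf : ∀ m, ‖f m‖ ≤ ‖aa p m‖ * (C m * ‖z‖ ^ j m)) : Summable f := by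
  set R := ‖z‖ + 1 with hR
  have hR1 : 1 ≤ R := by rw [hR]; linarith [norm_nonneg z]
  refine Summable.of_norm_bounded (summable_u p R) fun m => ?_
  exact (hf m).trans (key_bound p m (j m) (hj m) (C m) (hC0 m) (hC m) R hR1 ‖z‖ (norm_nonneg z)
    (by simp [hR]))

lemma summable_g0 (p : ℕ) (z : ℂ) : Summable (fun m : ℕ => aa p m * z ^ (2 * m + p)) := by
  refine summable_aux p z (fun _ => 1) (fun m => 2 * m + p) (fun m => le_refl _)
    (fun m => zero_le_one) (fun m => one_le_pow₀ (by norm_num : (1:ℝ) ≤ 4)) _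
    fun m => ?_
  rw [norm_mul, norm_pow, one_mul]


lemma summable_g1 (p : ℕ) (z : ℂ) :
    Summable (fun m : ℕ => aa p m * ((2 * m + p : ℕ) * z ^ (2 * m + p - 1))) := by
  refine summable_aux p z (fun m => (2 * m + p : ℕ)) (fun m => 2 * m + p - 1)
    (fun m => Nat.sub_le _ _) (fun m => by positivity) (fun m => nat_le_pow4 _) _ fun m => ?_
  rw [norm_mul, norm_mul, norm_pow, Complex.norm_natCast]

lemma summable_g2 (p : ℕ) (z : ℂ) :
    Summable (fun m : ℕ => aa p m * ((2 * m + p : ℕ) *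
      (((2 * m + p - 1 : ℕ) : ℂ) * z ^ (2 * m + p - 1 - 1)))) := by
  refine summable_aux p z (fun m => ((2 * m + p : ℕ) : ℝ) * ((2 * m + p - 1 : ℕ) : ℝ))
    (fun m => 2 * m + p - 1 - 1) (fun m => le_trans (Nat.sub_le _ _) (Nat.sub_le _ _))
    (fun m => by positivity) (fun m => ?_) _ fun m => ?_
  · refine le_trans ?_ (nat_sq_le_pow4 (2*m+p))
    have : ((2 * m + p - 1 : ℕ) : ℝ) ≤ ((2 * m + p : ℕ) : ℝ) := by exact_mod_cast Nat.sub_le _ _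
    exact mul_le_mul_of_nonneg_left this (Nat.cast_nonneg _)
  · rw [norm_mul, norm_mul, norm_mul, norm_pow, Complex.norm_natCast, Complex.norm_natCast]
    rw [mul_assoc]

lemma summable_t (p : ℕ) (z : ℂ) :
    Summable (fun m : ℕ => (4 * m * (m + p) : ℂ) * aa p m * z ^ (2 * m + p)) := by
  refine summable_aux p z (fun m => (4 * m * (m + p) : ℝ)) (fun m => 2 * m + p)
    (fun m => le_refl _) (fun m => by positivity) (fun m => ?_) _ fun m => ?_
  · refine le_trans ?_ (nat_sq_le_pow4 (2*m+p))
    have : (4 * m * (m + p) : ℝ) ≤ (2*m+p : ℕ) * (2*m+p : ℕ) := by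
      push_cast
      nlinarith [sq_nonneg ((p:ℝ))]
    exact this
  · rw [norm_mul, norm_mul, norm_pow]
    have : ‖(4 * m * (m + p) : ℂ)‖ = (4 * m * (m + p) : ℝ) := by
      rw [show (4 * m * (m + p) : ℂ) = ((4 * m * (m + p) : ℝ) : ℂ) by push_cast; ring,
        Complex.norm_real, Real.norm_eq_abs]
      exact _root_.abs_of_nonneg (by positivity)
    rw [this]; ring_nf; exact le_refl _

lemma hasDerivAt_tsum_g0 (p : ℕ) (z : ℂ) :
    HasDerivAt (fun w : ℂ => ∑' m : ℕ, aa p m * w ^ (2 * m + p))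
      (∑' m : ℕ, aa p m * (((2 * m + p : ℕ) : ℂ) * z ^ (2 * m + p - 1))) z := by
  set R := ‖z‖ + 1 with hRdef
  have hR1 : (1:ℝ) ≤ R := by rw [hRdef]; linarith [norm_nonneg z]
  have hR0 : (0:ℝ) < R := by linarith
  refine hasDerivAt_tsum_of_isPreconnected (summable_u p R) Metric.isOpen_ball
    ((convex_ball (0:ℂ) R).isPreconnected) (fun m y _ => (hasDerivAt_pow _ y).const_mul (aa p m))
    (fun m y hy => ?_) (Metric.mem_ball_self hR0) (by simpa using summable_g0 p 0) ?_
  · rw [norm_mul, norm_mul, norm_pow, Complex.norm_natCast]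
    refine key_bound p m _ (Nat.sub_le _ _) _ (Nat.cast_nonneg _) (nat_le_pow4 _) R hR1 ‖y‖
      (norm_nonneg y) ?_
    have := mem_ball_zero_iff.1 hy
    linarith
  · rw [hRdef]
    exact mem_ball_zero_iff.2 (by linarith)

lemma hasDerivAt_tsum_g1 (p : ℕ) (z : ℂ) :
    HasDerivAt (fun w : ℂ => ∑' m : ℕ, aa p m * (((2 * m + p : ℕ) : ℂ) * w ^ (2 * m + p - 1)))
      (∑' m : ℕ, aa p m * (((2 * m + p : ℕ) : ℂ) *
        (((2 * m + p - 1 : ℕ) : ℂ) * z ^ (2 * m + p - 1 - 1)))) z := by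
  set R := ‖z‖ + 1 with hRdef
  have hR1 : (1:ℝ) ≤ R := by rw [hRdef]; linarith [norm_nonneg z]
  have hR0 : (0:ℝ) < R := by linarith
  refine hasDerivAt_tsum_of_isPreconnected (summable_u p R) Metric.isOpen_ball
    ((convex_ball (0:ℂ) R).isPreconnected)
    (fun m y _ => (((hasDerivAt_pow _ y).const_mul (((2 * m + p : ℕ) : ℂ))).const_mul (aa p m)))
    (fun m y hy => ?_) (Metric.mem_ball_self hR0) (by simpa using summable_g1 p 0) ?_
  · rw [norm_mul, norm_mul, norm_mul, norm_pow, Complex.norm_natCast, Complex.norm_natCast]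
    rw [← mul_assoc (((2 * m + p : ℕ) : ℝ))]
    refine key_bound p m _ (le_trans (Nat.sub_le _ _) (Nat.sub_le _ _)) _ (by positivity) ?_ R hR1
      ‖y‖ (norm_nonneg y) ?_
    · refine le_trans ?_ (nat_sq_le_pow4 (2*m+p))
      have : ((2 * m + p - 1 : ℕ) : ℝ) ≤ ((2 * m + p : ℕ) : ℝ) := by
        exact_mod_cast Nat.sub_le _ _
      exact mul_le_mul_of_nonneg_left this (Nat.cast_nonneg _)
    · have := mem_ball_zero_iff.1 hy
      linarith
  · rw [hRdef]
    exact mem_ball_zero_iff.2 (by linarith)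

lemma besselJ_fun_eq (p : ℕ) :
    besselJ p = fun w : ℂ => ∑' m : ℕ, aa p m * w ^ (2 * m + p) :=
  funext fun z => besselJ_eq p z

lemma hasDerivAt_besselJ (p : ℕ) (z : ℂ) : HasDerivAt (besselJ p) (besselJ' p z) z := by
  have h := hasDerivAt_tsum_g0 p z
  rw [← besselJ_fun_eq] at h
  rwa [besselJ', h.deriv]

lemma besselJ'_eq (p : ℕ) (z : ℂ) :
    besselJ' p z = ∑' m : ℕ, aa p m * (((2 * m + p : ℕ) : ℂ) * z ^ (2 * m + p - 1)) := by
  have h := hasDerivAt_tsum_g0 p z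
  rw [← besselJ_fun_eq] at h
  rw [besselJ', h.deriv]

lemma besselJ'_fun_eq (p : ℕ) :
    besselJ' p = fun w : ℂ => ∑' m : ℕ, aa p m * (((2 * m + p : ℕ) : ℂ) * w ^ (2 * m + p - 1)) :=
  funext fun z => besselJ'_eq p z

/-- Second derivative of the Bessel function. -/
noncomputable def besselJ'' (p : ℕ) (z : ℂ) : ℂ :=
  ∑' m : ℕ, aa p m * (((2 * m + p : ℕ) : ℂ) *
    (((2 * m + p - 1 : ℕ) : ℂ) * z ^ (2 * m + p - 1 - 1)))

lemma hasDerivAt_besselJ' (p : ℕ) (z : ℂ) : HasDerivAt (besselJ' p) (besselJ'' p z) z := by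
  have h := hasDerivAt_tsum_g1 p z
  rw [← besselJ'_fun_eq] at h
  exact h

lemma aa_ratio (p m : ℕ) : (4 * (m + 1) * ((m + 1) + p) : ℂ) * aa p (m + 1) = - aa p m := by
  unfold aa
  have h1 : (m + 1) + p = (m + p) + 1 := by omega
  rw [h1, Nat.factorial_succ, Nat.factorial_succ]
  have e2 : 2 * (m + 1) + p = (2 * m + p) + 2 := by omega
  rw [e2, pow_add]
  have hf1 : ((Nat.factorial m : ℂ)) ≠ 0 := Nat.cast_ne_zero.2 (Nat.factorial_ne_zero m)
  have hf2 : ((Nat.factorial (m + p) : ℂ)) ≠ 0 := Nat.cast_ne_zero.2 (Nat.factorial_ne_zero _)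
  have hm1 : ((m : ℂ) + 1) ≠ 0 := by
    have : ((m + 1 : ℕ) : ℂ) ≠ 0 := Nat.cast_ne_zero.2 (Nat.succ_ne_zero m)
    push_cast at this; exact this
  have hmp1 : ((m : ℂ) + (p : ℂ) + 1) ≠ 0 := by
    have : (((m + p) + 1 : ℕ) : ℂ) ≠ 0 := Nat.cast_ne_zero.2 (Nat.succ_ne_zero _)
    push_cast at this; exact this
  have hmp2 : ((m : ℂ) + 1 + (p : ℂ)) ≠ 0 := by
    intro h; apply hmp1; rw [← h]; ring
  have h2 : (2:ℂ) ^ (2 * m + p) ≠ 0 := pow_ne_zero _ two_ne_zero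
  push_cast
  rw [pow_succ]
  field_simp
  ring

lemma alg_aux (p m : ℕ) (z : ℂ) :
    z ^ 2 * (((2 * m + p : ℕ) : ℂ) * (((2 * m + p - 1 : ℕ) : ℂ) * z ^ (2 * m + p - 1 - 1)))
      + z * (((2 * m + p : ℕ) : ℂ) * z ^ (2 * m + p - 1))
      + (z ^ 2 - (p : ℂ) ^ 2) * z ^ (2 * m + p)
      = (4 * m * (m + p) : ℂ) * z ^ (2 * m + p) + z ^ (2 * m + p + 2) := by
  rcases m with _ | i
  · rcases p with _ | _ | q
    · norm_num
    · norm_num; ring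
    · simp only [show 2 * 0 + (q + 1 + 1) = q + 2 by omega, show q + 2 - 1 = q + 1 by omega,
        show q + 1 - 1 = q by omega]
      push_cast
      ring
  · simp only [show 2 * (i + 1) + p = 2 * i + p + 2 by omega,
      show 2 * i + p + 2 - 1 = 2 * i + p + 1 by omega,
      show 2 * i + p + 1 - 1 = 2 * i + p by omega]
    push_cast
    ring

lemma bessel_ode (p : ℕ) (z : ℂ) :
    z ^ 2 * besselJ'' p z + z * besselJ' p z + (z ^ 2 - (p : ℂ) ^ 2) * besselJ p z = 0 := by
  rw [besselJ_eq, besselJ'_eq, besselJ'']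
  set t : ℕ → ℂ := fun m => (4 * m * (m + p) : ℂ) * aa p m * z ^ (2 * m + p) with ht
  have hst : Summable t := summable_t p z
  have hst1 : Summable (fun m => t (m + 1)) := (summable_nat_add_iff 1).2 hst
  have key : ∀ m : ℕ,
      z ^ 2 * (aa p m * (((2 * m + p : ℕ) : ℂ) *
          (((2 * m + p - 1 : ℕ) : ℂ) * z ^ (2 * m + p - 1 - 1))))
        + z * (aa p m * (((2 * m + p : ℕ) : ℂ) * z ^ (2 * m + p - 1)))
        + (z ^ 2 - (p : ℂ) ^ 2) * (aa p m * z ^ (2 * m + p))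
        = t m - t (m + 1) := by
    intro m
    have halg := alg_aux p m z
    have hrat := aa_ratio p m
    have h1 : t m = (4 * m * (m + p) : ℂ) * aa p m * z ^ (2 * m + p) := rfl
    have h2 : t (m + 1) = (4 * (m + 1) * ((m + 1) + p) : ℂ) * aa p (m + 1)
        * z ^ (2 * (m + 1) + p) := by
      rw [ht]; push_cast; ring
    rw [h1, h2, hrat, show 2 * (m + 1) + p = 2 * m + p + 2 by omega]
    calc z ^ 2 * (aa p m * (((2 * m + p : ℕ) : ℂ) *
          (((2 * m + p - 1 : ℕ) : ℂ) * z ^ (2 * m + p - 1 - 1))))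
        + z * (aa p m * (((2 * m + p : ℕ) : ℂ) * z ^ (2 * m + p - 1)))
        + (z ^ 2 - (p : ℂ) ^ 2) * (aa p m * z ^ (2 * m + p))
        = aa p m * (z ^ 2 * (((2 * m + p : ℕ) : ℂ) *
            (((2 * m + p - 1 : ℕ) : ℂ) * z ^ (2 * m + p - 1 - 1)))
          + z * (((2 * m + p : ℕ) : ℂ) * z ^ (2 * m + p - 1))
          + (z ^ 2 - (p : ℂ) ^ 2) * z ^ (2 * m + p)) := by ring
      _ = aa p m * ((4 * m * (m + p) : ℂ) * z ^ (2 * m + p) + z ^ (2 * m + p + 2)) := by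
          rw [halg]
      _ = (4 * m * (m + p) : ℂ) * aa p m * z ^ (2 * m + p)
            - -aa p m * z ^ (2 * m + p + 2) := by ring
  have hs2 : Summable (fun m : ℕ => aa p m * (((2 * m + p : ℕ) : ℂ) *
      (((2 * m + p - 1 : ℕ) : ℂ) * z ^ (2 * m + p - 1 - 1)))) := summable_g2 p z
  have hs1 : Summable (fun m : ℕ => aa p m * (((2 * m + p : ℕ) : ℂ) * z ^ (2 * m + p - 1))) :=
    summable_g1 p z
  have hs0 : Summable (fun m : ℕ => aa p m * z ^ (2 * m + p)) := summable_g0 p z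
  rw [← tsum_mul_left, ← tsum_mul_left, ← tsum_mul_left]
  rw [← Summable.tsum_add (hs2.mul_left _) (hs1.mul_left _),
    ← Summable.tsum_add ((hs2.mul_left _).add (hs1.mul_left _)) (hs0.mul_left _)]
  calc (∑' m : ℕ, (z ^ 2 * (aa p m * (((2 * m + p : ℕ) : ℂ) *
          (((2 * m + p - 1 : ℕ) : ℂ) * z ^ (2 * m + p - 1 - 1))))
        + z * (aa p m * (((2 * m + p : ℕ) : ℂ) * z ^ (2 * m + p - 1)))
        + (z ^ 2 - (p : ℂ) ^ 2) * (aa p m * z ^ (2 * m + p))))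
      = ∑' m : ℕ, (t m - t (m + 1)) := tsum_congr key
    _ = (∑' m : ℕ, t m) - ∑' m : ℕ, t (m + 1) := Summable.tsum_sub hst hst1
    _ = 0 := by
        rw [Summable.tsum_eq_zero_add hst]
        have ht0 : t 0 = 0 := by rw [ht]; push_cast; ring
        rw [ht0]
        ring

/-- The ITE determinant function `F_p(κ, n)`. -/
noncomputable def Fp (p : ℕ) (κ : ℂ) (n : ℝ) : ℂ :=
  κ * (besselJ' p κ * besselJ p ((Real.sqrt n : ℂ) * κ)
    - (Real.sqrt n : ℂ) * besselJ p κ * besselJ' p ((Real.sqrt n : ℂ) * κ))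

/-- the implicit-derivative quotient `κ'_n` at a root of `F_p`. -/
theorem stmt_5 (p : ℕ) (n : ℝ) (hn : 0 < n) (hn1 : n ≠ 1) (κ : ℂ) (hκ : κ ≠ 0)
    (hF : Fp p κ n = 0) (hJ : besselJ p κ ≠ 0)
    (hJn : besselJ p ((Real.sqrt n : ℂ) * κ) ≠ 0) :
    -(deriv (fun t : ℝ => Fp p κ t) n) / (deriv (fun z : ℂ => Fp p z n) κ)
      = -(((n : ℂ) * κ ^ 2 - (p : ℂ) ^ 2) / (2 * (n : ℂ) * ((n : ℂ) - 1) * κ))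
        - κ * (besselJ' p κ) ^ 2 / (2 * (n : ℂ) * ((n : ℂ) - 1) * (besselJ p κ) ^ 2) := by
  have h1 := hasDerivAt_besselJ p
  have h2 := hasDerivAt_besselJ' p
  have hsr : (0:ℝ) < Real.sqrt n := Real.sqrt_pos.2 hn
  have hS0 : (Real.sqrt n : ℂ) ≠ 0 := by simpa using hsr.ne'
  have hs2 : (Real.sqrt n : ℂ) ^ 2 = (n : ℂ) := by
    rw [← Complex.ofReal_pow, Real.sq_sqrt hn.le]
  have hS21 : (Real.sqrt n : ℂ) ^ 2 - 1 ≠ 0 := by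
    rw [hs2]
    exact sub_ne_zero.2 (by exact_mod_cast hn1)
  have hW : besselJ' p κ * besselJ p ((Real.sqrt n : ℂ) * κ) - (Real.sqrt n : ℂ) * besselJ p κ * besselJ' p ((Real.sqrt n : ℂ) * κ) = 0 := by
    have h := hF
    rw [Fp] at h
    rcases mul_eq_zero.1 h with h | h
    · exact absurd h hκ
    · exact h
  have P1 := bessel_ode p κ
  have P2 := bessel_ode p ((Real.sqrt n : ℂ) * κ)
  have hc2 : 2 * (Real.sqrt n : ℂ) * ((1 / (2 * Real.sqrt n) : ℝ) : ℂ) = 1 := by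
    push_cast
    field_simp
  -- derivative in κ
  have hdκ : HasDerivAt (fun z : ℂ => Fp p z n) (1 * (besselJ' p κ * besselJ p ((Real.sqrt n : ℂ) * κ) - (Real.sqrt n : ℂ) * besselJ p κ * besselJ' p ((Real.sqrt n : ℂ) * κ)) + κ * ((besselJ'' p κ * besselJ p ((Real.sqrt n : ℂ) * κ) + besselJ' p κ * (besselJ' p ((Real.sqrt n : ℂ) * κ) * (Real.sqrt n : ℂ))) - (((Real.sqrt n : ℂ) * besselJ' p κ) * besselJ' p ((Real.sqrt n : ℂ) * κ) + ((Real.sqrt n : ℂ) * besselJ p κ) * (besselJ'' p ((Real.sqrt n : ℂ) * κ) * (Real.sqrt n : ℂ))))) κ := by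
    have hsz : HasDerivAt (fun w : ℂ => (Real.sqrt n : ℂ) * w) (Real.sqrt n : ℂ) κ := by
      simpa using (hasDerivAt_id κ).const_mul (Real.sqrt n : ℂ)
    have hJs : HasDerivAt (fun w : ℂ => besselJ p ((Real.sqrt n : ℂ) * w)) (besselJ' p ((Real.sqrt n : ℂ) * κ) * (Real.sqrt n : ℂ)) κ :=
      (h1 ((Real.sqrt n : ℂ) * κ)).comp κ hsz
    have hBs : HasDerivAt (fun w : ℂ => besselJ' p ((Real.sqrt n : ℂ) * w)) (besselJ'' p ((Real.sqrt n : ℂ) * κ) * (Real.sqrt n : ℂ)) κ :=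
      (h2 ((Real.sqrt n : ℂ) * κ)).comp κ hsz
    have hinner := ((h2 κ).mul hJs).sub (((h1 κ).const_mul (Real.sqrt n : ℂ)).mul hBs)
    exact (hasDerivAt_id κ).mul hinner
  -- derivative in n
  have hdn : HasDerivAt (fun t : ℝ => Fp p κ t) (κ * (besselJ' p κ * (((1 / (2 * Real.sqrt n) : ℝ) : ℂ) * κ * besselJ' p ((Real.sqrt n : ℂ) * κ)) - ((((1 / (2 * Real.sqrt n) : ℝ) : ℂ) * besselJ p κ) * besselJ' p ((Real.sqrt n : ℂ) * κ) + ((Real.sqrt n : ℂ) * besselJ p κ) * (((1 / (2 * Real.sqrt n) : ℝ) : ℂ) * κ * besselJ'' p ((Real.sqrt n : ℂ) * κ))))) n := by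
    have hσ : HasDerivAt (fun t : ℝ => ((Real.sqrt t : ℝ) : ℂ)) ((1 / (2 * Real.sqrt n) : ℝ) : ℂ) n :=
      (Real.hasDerivAt_sqrt hn.ne').ofReal_comp
    have hσκ : HasDerivAt (fun t : ℝ => ((Real.sqrt t : ℝ) : ℂ) * κ) (((1 / (2 * Real.sqrt n) : ℝ) : ℂ) * κ) n :=
      hσ.mul_const κ
    have hJσ : HasDerivAt (fun t : ℝ => besselJ p (((Real.sqrt t : ℝ) : ℂ) * κ))
        (((1 / (2 * Real.sqrt n) : ℝ) : ℂ) * κ * besselJ' p ((Real.sqrt n : ℂ) * κ)) n := by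
      simpa [smul_eq_mul, Function.comp_def] using (h1 ((Real.sqrt n : ℂ) * κ)).scomp n hσκ
    have hBσ : HasDerivAt (fun t : ℝ => besselJ' p (((Real.sqrt t : ℝ) : ℂ) * κ))
        (((1 / (2 * Real.sqrt n) : ℝ) : ℂ) * κ * besselJ'' p ((Real.sqrt n : ℂ) * κ)) n := by
      simpa [smul_eq_mul, Function.comp_def] using (h2 ((Real.sqrt n : ℂ) * κ)).scomp n hσκ
    have hA : HasDerivAt (fun t : ℝ => ((Real.sqrt t : ℝ) : ℂ) * besselJ p κ) (((1 / (2 * Real.sqrt n) : ℝ) : ℂ) * besselJ p κ) n :=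
      hσ.mul_const (besselJ p κ)
    have hinner := (hJσ.const_mul (besselJ' p κ)).sub (hA.mul hBσ)
    exact hinner.const_mul κ
  have hEκv : deriv (fun z : ℂ => Fp p z n) κ = ((Real.sqrt n : ℂ) ^ 2 - 1) * κ * besselJ p κ * besselJ p ((Real.sqrt n : ℂ) * κ) := by
    rw [hdκ.deriv]
    apply mul_left_cancel₀ (show (Real.sqrt n : ℂ) ^ 2 * κ ^ 2 * besselJ p κ ≠ 0 from
      mul_ne_zero (mul_ne_zero (pow_ne_zero _ hS0) (pow_ne_zero _ hκ)) hJ)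
    linear_combination ((Real.sqrt n : ℂ) ^ 2 * κ * besselJ p κ * besselJ p ((Real.sqrt n : ℂ) * κ)) * P1 + (-((Real.sqrt n : ℂ) ^ 2 * κ * besselJ p κ ^ 2)) * P2
  have hEn2 : 2 * (Real.sqrt n : ℂ) ^ 2 * besselJ p κ * deriv (fun t : ℝ => Fp p κ t) n
      = κ ^ 2 * besselJ' p κ ^ 2 * besselJ p ((Real.sqrt n : ℂ) * κ) + ((Real.sqrt n : ℂ) ^ 2 * κ ^ 2 - (p:ℂ) ^ 2) * besselJ p κ ^ 2 * besselJ p ((Real.sqrt n : ℂ) * κ) := by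
    rw [hdn.deriv]
    linear_combination (-(2 * (Real.sqrt n : ℂ) * ((1 / (2 * Real.sqrt n) : ℝ) : ℂ) * besselJ p κ ^ 2)) * P2 + (-(2 * (Real.sqrt n : ℂ) * κ ^ 2 * ((1 / (2 * Real.sqrt n) : ℝ) : ℂ) * besselJ' p κ)) * hW
      + (((Real.sqrt n : ℂ) ^ 2 * κ ^ 2 - (p:ℂ) ^ 2) * besselJ p κ ^ 2 * besselJ p ((Real.sqrt n : ℂ) * κ) + κ ^ 2 * besselJ' p κ ^ 2 * besselJ p ((Real.sqrt n : ℂ) * κ)) * hc2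
  have hD1 : 2 * (Real.sqrt n : ℂ) ^ 2 * ((Real.sqrt n : ℂ) ^ 2 - 1) * κ ≠ 0 :=
    mul_ne_zero (mul_ne_zero (mul_ne_zero two_ne_zero (pow_ne_zero _ hS0)) hS21) hκ
  have hD2 : 2 * (Real.sqrt n : ℂ) ^ 2 * ((Real.sqrt n : ℂ) ^ 2 - 1) * besselJ p κ ^ 2 ≠ 0 :=
    mul_ne_zero (mul_ne_zero (mul_ne_zero two_ne_zero (pow_ne_zero _ hS0)) hS21)
      (pow_ne_zero _ hJ)
  have hDen : ((Real.sqrt n : ℂ) ^ 2 - 1) * κ * besselJ p κ * besselJ p ((Real.sqrt n : ℂ) * κ) ≠ 0 :=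
    mul_ne_zero (mul_ne_zero (mul_ne_zero hS21 hκ) hJ) hJn
  have h2S2jv : 2 * (Real.sqrt n : ℂ) ^ 2 * besselJ p κ ≠ 0 :=
    mul_ne_zero (mul_ne_zero two_ne_zero (pow_ne_zero _ hS0)) hJ
  rw [hEκv, ← hs2, ← neg_div, div_sub_div _ _ hD1 hD2, div_eq_div_iff hDen
    (mul_ne_zero hD1 hD2)]
  apply mul_left_cancel₀ h2S2jv
  linear_combination (-((2 * (Real.sqrt n : ℂ) ^ 2 * ((Real.sqrt n : ℂ) ^ 2 - 1) * κ) * (2 * (Real.sqrt n : ℂ) ^ 2 * ((Real.sqrt n : ℂ) ^ 2 - 1)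
    * besselJ p κ ^ 2))) * hEn2
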